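/- Let G' be a finite directed graph with nonnegative edge weights containing a directed path P₂ of total length 0 and a sequence P₁ of distinct vertices disjoint from P₂ equipped with a linear order ≤_{P₁}, such that no vertex of P₁ has an outgoing edge in G' and every edge of G' whose head lies on P₂ is an edge of P₂. Assume the crossing hypothesis: whenever W is a walk in G' from a vertex b of P₂ to a vertex p of P₁ and W' is a walk in G' from a vertex b' of P₂ to a vertex p' of P₁ with b' <_{P₂} b and p' <_{P₁} p, the walks W and W' share a vertex. Let β > 0 and ε > 0. Then there exist sequences b₁ <_{P₂} b₂ <_{P₂} … <_{P₂} b_t of vertices of P₂ and v₁, …, v_t of vertices of P₁, with t ≤ 1/ε + 1, such that: (1) for every vertex b of P₂ for which dfirst_{G'}(b,P₁,β) exists, the set {i : b ≤_{P₂} b_i} is nonempty, and the ≤_{P₁}-least element v of {v_i : b ≤_{P₂} b_i} satisfies v ≤_{P₁} dfirst_{G'}(b,P₁,β) and some walk in G' from b to v has length at most (1+ε)β; and (2) for every vertex b of P₂ with b_t <_{P₂} b, no walk in G' of length at most β leads from b to a vertex of P₁. -/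

import Mathlib

/-- A walk in the directed graph with edge relation `E`: a nonempty list of vertices
starting at `u`, ending at `v`, with every consecutive pair an edge. -/
def IsWalk {V : Type*} (E : V → V → Prop) (l : List V) (u v : V) : Prop :=
  l ≠ [] ∧ l.head? = some u ∧ l.getLast? = some v ∧ l.Chain' E

/-- The length of a walk: the sum of the weights of its consecutive pairs. -/
def walkLen {V : Type*} (w : V → V → ℝ) (l : List V) : ℝ :=
  ((l.zip l.tail).map fun q => w q.1 q.2).sum

/-- `b` is `dfirst_G(v,Q,β)`: the `≤_Q`-least vertex of the ordered vertex list `q`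
reachable from `v` by a walk of length at most `β`. -/
def IsDFirst {V : Type*} [DecidableEq V] (E : V → V → Prop) (w : V → V → ℝ)
    (v : V) (q : List V) (β : ℝ) (b : V) : Prop :=
  b ∈ q ∧ (∃ l, IsWalk E l v b ∧ walkLen w l ≤ β) ∧
    ∀ c ∈ q, (∃ l, IsWalk E l v c ∧ walkLen w l ≤ β) → q.idxOf b ≤ q.idxOf c

set_option linter.unusedSectionVars false

namespace Stmt9

variable {V : Type*} [DecidableEq V]

theorem walkLen_nonneg (w : V → V → ℝ) (hw : ∀ x y, 0 ≤ w x y) (l : List V) :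
    0 ≤ walkLen w l :=
  List.sum_nonneg (fun x hx => by
    obtain ⟨q, _, rfl⟩ := List.mem_map.1 hx
    exact hw _ _)

theorem walkLen_single (w : V → V → ℝ) (a : V) : walkLen w [a] = 0 := by simp [walkLen]

theorem walkLen_cons_cons (w : V → V → ℝ) (a b : V) (l : List V) :
    walkLen w (a :: b :: l) = w a b + walkLen w (b :: l) := by
  simp [walkLen]

theorem isWalk_single {E : V → V → Prop} {a u v : V} :
    IsWalk E [a] u v ↔ u = a ∧ v = a := by
  constructor
  · rintro ⟨-, h1, h2, -⟩
    simp only [List.head?_cons, Option.some.injEq] at h1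
    simp only [List.getLast?_singleton, Option.some.injEq] at h2
    exact ⟨h1.symm, h2.symm⟩
  · rintro ⟨rfl, rfl⟩
    exact ⟨by simp, by simp, by simp, List.isChain_singleton _⟩

theorem isWalk_cons_cons {E : V → V → Prop} {a b : V} {l : List V} {u v : V} :
    IsWalk E (a :: b :: l) u v ↔ u = a ∧ E a b ∧ IsWalk E (b :: l) b v := by
  constructor
  · rintro ⟨-, h1, h2, h3⟩
    obtain ⟨hE, hch⟩ := List.isChain_cons_cons.1 h3
    refine ⟨(Option.some.inj h1).symm, hE, List.cons_ne_nil _ _, rfl, ?_, hch⟩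
    rwa [List.getLast?_cons_cons] at h2
  · rintro ⟨rfl, hE, -, -, h2, h3⟩
    exact ⟨List.cons_ne_nil _ _, rfl, by rwa [List.getLast?_cons_cons], List.isChain_cons_cons.2 ⟨hE, h3⟩⟩

theorem walk_trans {E : V → V → Prop} (w : V → V → ℝ) {l₁ l₂ : List V} {u v x : V}
    (h₁ : IsWalk E l₁ u v) (h₂ : IsWalk E l₂ v x) :
    ∃ l, IsWalk E l u x ∧ walkLen w l = walkLen w l₁ + walkLen w l₂ := by
  induction l₁ generalizing u with
  | nil => exact absurd rfl h₁.1
  | cons a tl ih =>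
    cases tl with
    | nil =>
      obtain ⟨rfl, rfl⟩ := isWalk_single.1 h₁
      exact ⟨l₂, h₂, by rw [walkLen_single]; ring⟩
    | cons b tl2 =>
      obtain ⟨rfl, hE, hwk⟩ := isWalk_cons_cons.1 h₁
      obtain ⟨l, hl, hlen⟩ := ih hwk
      cases l with
      | nil => exact absurd rfl hl.1
      | cons c rest =>
        have hc : c = b := by
          have := hl.2.1
          simp only [List.head?_cons, Option.some.injEq] at this
          exact this
        subst hc
        refine ⟨u :: c :: rest, isWalk_cons_cons.2 ⟨rfl, hE, hl⟩, ?_⟩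
        rw [walkLen_cons_cons, walkLen_cons_cons, hlen]
        ring

theorem walk_split {E : V → V → Prop} (w : V → V → ℝ) {C : List V} {u q z : V}
    (h : IsWalk E C u q) (hz : z ∈ C) :
    ∃ C₁ C₂, IsWalk E C₁ u z ∧ IsWalk E C₂ z q ∧
      walkLen w C = walkLen w C₁ + walkLen w C₂ := by
  induction C generalizing u with
  | nil => simp at hz
  | cons a tl ih =>
    cases tl with
    | nil =>
      obtain ⟨hu, hq⟩ := isWalk_single.1 h
      have hz' : z = a := by simpa using hz
      subst hu; subst hq; subst hz'
      exact ⟨[z], [z], isWalk_single.2 ⟨rfl, rfl⟩, isWalk_single.2 ⟨rfl, rfl⟩,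
        by simp [walkLen]⟩
    | cons b tl2 =>
      obtain ⟨rfl, hE, hwk⟩ := isWalk_cons_cons.1 h
      rcases List.mem_cons.1 hz with rfl | hz'
      · exact ⟨[z], z :: b :: tl2, isWalk_single.2 ⟨rfl, rfl⟩, h,
          by rw [walkLen_single]; ring⟩
      · obtain ⟨C₁, C₂, h1, h2, hlen⟩ := ih hwk hz'
        cases C₁ with
        | nil => exact absurd rfl h1.1
        | cons c r =>
          have hc : c = b := by
            have := h1.2.1
            simp only [List.head?_cons, Option.some.injEq] at this
            exact this
          subst hc
          refine ⟨u :: c :: r, C₂, isWalk_cons_cons.2 ⟨rfl, hE, h1⟩, h2, ?_⟩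
          rw [walkLen_cons_cons, walkLen_cons_cons, hlen]
          ring

theorem sum_zero_of_nonneg {l : List ℝ} (h0 : ∀ x ∈ l, 0 ≤ x) (hs : l.sum = 0) :
    ∀ x ∈ l, x = 0 := by
  induction l with
  | nil => simp
  | cons a tl ih =>
    have hts : 0 ≤ tl.sum := List.sum_nonneg (fun x hx => h0 x (List.mem_cons_of_mem _ hx))
    have ha : 0 ≤ a := h0 a List.mem_cons_self
    rw [List.sum_cons] at hs
    have ha0 : a = 0 := by linarith
    have hts0 : tl.sum = 0 := by linarith
    intro x hx
    rcases List.mem_cons.1 hx with rfl | hx'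
    · exact ha0
    · exact ih (fun y hy => h0 y (List.mem_cons_of_mem _ hy)) hts0 x hx'


section
variable (E : V → V → Prop) (w : V → V → ℝ)

/-- Reachability by a walk of length at most `γ`. -/
def Reach (γ : ℝ) (x c : V) : Prop := ∃ l, IsWalk E l x c ∧ walkLen w l ≤ γ

theorem reach_budget {γ₁ γ₂ : ℝ} (h : γ₁ ≤ γ₂) {x c : V} :
    Reach E w γ₁ x c → Reach E w γ₂ x c := by
  rintro ⟨l, hl, hlen⟩; exact ⟨l, hl, le_trans hlen h⟩

variable {p₂ : List V}

theorem p2_edge (hch : p₂.Chain' E) {k : ℕ} (hk : k + 1 < p₂.length) :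
    E (p₂[k]'(by omega)) (p₂[k+1]'hk) := by
  have := List.isChain_iff_getElem.1 hch k (by omega)
  simpa [List.get_eq_getElem] using this

theorem p2_edge_zero (hw : ∀ x y, 0 ≤ w x y) (hlen : walkLen w p₂ = 0) {k : ℕ}
    (hk : k + 1 < p₂.length) :
    w (p₂[k]'(by omega)) (p₂[k+1]'hk) = 0 := by
  have hmem : (p₂[k]'(by omega), p₂[k+1]'hk) ∈ p₂.zip p₂.tail := by
    have hlt : k < (p₂.zip p₂.tail).length := by
      rw [List.length_zip, List.length_tail]; omega
    have : (p₂.zip p₂.tail)[k]'hlt = (p₂[k]'(by omega), p₂.tail[k]'(by rw [List.length_tail]; omega)) :=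
      List.getElem_zip ..
    rw [List.getElem_tail] at this
    exact this ▸ List.getElem_mem hlt
  have hmem2 : w (p₂[k]'(by omega)) (p₂[k+1]'hk) ∈ (p₂.zip p₂.tail).map fun q => w q.1 q.2 :=
    List.mem_map_of_mem hmem
  exact sum_zero_of_nonneg (fun x hx => by
    obtain ⟨q, _, rfl⟩ := List.mem_map.1 hx; exact hw _ _) hlen _ hmem2

theorem free_walk (hw : ∀ x y, 0 ≤ w x y) (hch : p₂.Chain' E) (hlen : walkLen w p₂ = 0) :
    ∀ j, ∀ i, ∀ hi : i ≤ j, ∀ hj : j < p₂.length,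
      ∃ l, IsWalk E l (p₂[i]'(lt_of_le_of_lt hi hj)) (p₂[j]'hj) ∧ walkLen w l = 0 := by
  intro j
  induction j with
  | zero =>
    intro i hi hj
    interval_cases i
    exact ⟨[p₂[0]'hj], isWalk_single.2 ⟨rfl, rfl⟩, walkLen_single _ _⟩
  | succ m ih =>
    intro i hi hj
    rcases Nat.lt_or_ge i (m+1) with hlt | hge
    · have hm : m < p₂.length := by omega
      obtain ⟨l, hl, hl0⟩ := ih i (by omega) hm
      have hedge : IsWalk E [p₂[m]'hm, p₂[m+1]'hj] (p₂[m]'hm) (p₂[m+1]'hj) :=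
        isWalk_cons_cons.2 ⟨rfl, p2_edge E hch hj, isWalk_single.2 ⟨rfl, rfl⟩⟩
      obtain ⟨l', hl', hlen'⟩ := walk_trans w hl hedge
      refine ⟨l', hl', ?_⟩
      rw [hlen', hl0, walkLen_cons_cons, walkLen_single, p2_edge_zero w hw hlen hj]
      ring
    · obtain rfl : i = m + 1 := by omega
      exact ⟨[p₂[m+1]'hj], isWalk_single.2 ⟨rfl, rfl⟩, walkLen_single _ _⟩

theorem reach_idx_mono (hw : ∀ x y, 0 ≤ w x y) (hch : p₂.Chain' E) (hlen : walkLen w p₂ = 0)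
    {γ : ℝ} {i j : ℕ} (hij : i ≤ j) (hj : j < p₂.length) {c : V}
    (h : Reach E w γ (p₂[j]'hj) c) : Reach E w γ (p₂[i]'(lt_of_le_of_lt hij hj)) c := by
  obtain ⟨l, hl, hle⟩ := h
  obtain ⟨l0, hl0, h0⟩ := free_walk E w hw hch hlen j i hij hj
  obtain ⟨l', hl', hlen'⟩ := walk_trans w hl0 hl
  exact ⟨l', hl', by rw [hlen', h0]; linarith⟩

end

theorem find?_min {α : Type*} [DecidableEq α] {p : α → Bool} {l : List α} {a b : α}
    (h : l.find? p = some a) (hb : b ∈ l) (hpb : p b) : l.idxOf a ≤ l.idxOf b := by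
  induction l with
  | nil => simp at h
  | cons c tl ih =>
    by_cases hc : p c
    · rw [List.find?_cons_of_pos hc] at h
      obtain rfl := Option.some.inj h
      simp [List.idxOf_cons_self]
    · rw [List.find?_cons_of_neg hc] at h
      rcases List.mem_cons.1 hb with rfl | hb'
      · exact absurd hpb (by simpa using hc)
      · have hrec := ih h hb'
        have ha : a ≠ c := fun e => hc (e ▸ List.find?_some h)
        have hbn : b ≠ c := fun e => hc (e ▸ hpb)
        rw [List.idxOf_cons_ne _ (Ne.symm ha), List.idxOf_cons_ne _ (Ne.symm hbn)]
        omega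

noncomputable section
open Classical

variable (E : V → V → Prop) (w : V → V → ℝ) (p₂ p₁ : List V) (β ε : ℝ) (xdef : V)

/-- the `j`-th vertex of `p₂` (with default). -/
def XX : ℕ → V := fun j => p₂.getD j xdef

theorem XX_eq {j : ℕ} (hj : j < p₂.length) : XX p₂ xdef j = p₂[j]'hj :=
  List.getD_eq_getElem _ _ hj

theorem XX_mem {j : ℕ} (hj : j < p₂.length) : XX p₂ xdef j ∈ p₂ := by
  rw [XX_eq p₂ xdef hj]; exact List.getElem_mem hj

/-- `x` reaches `p₁` within budget β. -/
def RP (x : V) : Prop := ∃ c ∈ p₁, Reach E w β x c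

/-- the first vertex of `p₁` reachable from `x` within budget β. -/
def vf (x : V) : V := (p₁.find? fun c => decide (Reach E w β x c)).getD xdef

theorem vf_spec {x : V} (h : RP E w p₁ β x) :
    vf E w p₁ β xdef x ∈ p₁ ∧ Reach E w β x (vf E w p₁ β xdef x) ∧
      ∀ c ∈ p₁, Reach E w β x c → p₁.idxOf (vf E w p₁ β xdef x) ≤ p₁.idxOf c := by
  obtain ⟨c, hc, hrc⟩ := h
  have hsome : (p₁.find? fun c => decide (Reach E w β x c)).isSome :=
    List.find?_isSome.2 ⟨c, hc, decide_eq_true hrc⟩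
  obtain ⟨a, ha⟩ := Option.isSome_iff_exists.1 hsome
  have hvf : vf E w p₁ β xdef x = a := by rw [vf, ha]; rfl
  rw [hvf]
  refine ⟨List.mem_of_find?_eq_some ha, ?_, ?_⟩
  · have hp := List.find?_some ha
    exact of_decide_eq_true hp
  · intro c' hc' hrc'
    exact find?_min ha hc' (decide_eq_true hrc')

/-- indices of `p₂` that reach `v'` within `(1+ε)β`. -/
def FS (v' : V) : Finset ℕ :=
  (Finset.range p₂.length).filter fun j => Reach E w ((1+ε)*β) (XX p₂ xdef j) v'

theorem FS_mem {v' : V} {j : ℕ} :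
    j ∈ FS E w p₂ β ε xdef v' ↔ j < p₂.length ∧ Reach E w ((1+ε)*β) (XX p₂ xdef j) v' := by
  simp [FS]

/-- the last index of `p₂` that reaches `v'` within `(1+ε)β`. -/
def Bx (v' : V) : ℕ :=
  if h : (FS E w p₂ β ε xdef v').Nonempty then (FS E w p₂ β ε xdef v').max' h else 0

theorem Bx_mem {v' : V} (h : (FS E w p₂ β ε xdef v').Nonempty) :
    Bx E w p₂ β ε xdef v' ∈ FS E w p₂ β ε xdef v' := by
  rw [Bx, dif_pos h]; exact Finset.max'_mem _ h

theorem Bx_le {v' : V} (h : (FS E w p₂ β ε xdef v').Nonempty) {j : ℕ}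
    (hj : j ∈ FS E w p₂ β ε xdef v') : j ≤ Bx E w p₂ β ε xdef v' := by
  rw [Bx, dif_pos h]; exact Finset.le_max' _ _ hj

/-- the greedy recursion producing the start index of each block. -/
def gg : ℕ → Option ℕ
  | 0 => if 0 < p₂.length ∧ RP E w p₁ β (XX p₂ xdef 0) then some 0 else none
  | (i+1) => (gg i).bind fun s =>
      let B := Bx E w p₂ β ε xdef (vf E w p₁ β xdef (XX p₂ xdef s))
      if B + 1 < p₂.length ∧ RP E w p₁ β (XX p₂ xdef (B+1)) then some (B+1) else none

end

end Stmt9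

/-- There are sequences `b₁ <_{P₂} … <_{P₂} b_t` and `v₁, …, v_t` with
`t ≤ 1/ε + 1` such that (1) every `b` on `P₂` with `dfirst(b,P₁,β)` defined has a
nonempty set `{i : b ≤_{P₂} b_i}` whose `≤_{P₁}`-least associated `v_i` is at most
`dfirst(b,P₁,β)` on `P₁` and is reachable from `b` by a walk of length at most
`(1+ε)β`; and (2) no vertex of `P₂` strictly after `b_t` reaches `P₁` within `β`. -/
theorem stmt_9 {V : Type*} [Fintype V] [DecidableEq V] (E : V → V → Prop)
    (w : V → V → ℝ) (hw : ∀ x y, 0 ≤ w x y)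
    (p₂ p₁ : List V) (hp₂nd : p₂.Nodup) (hp₂ch : p₂.Chain' E)
    (hp₂len : walkLen w p₂ = 0) (hp₁nd : p₁.Nodup)
    (hdisj : ∀ x ∈ p₁, x ∉ p₂)
    (hnoout : ∀ x ∈ p₁, ∀ y, ¬ E x y)
    (hhead : ∀ x y, E x y → y ∈ p₂ → ∃ i, p₂[i]? = some x ∧ p₂[i+1]? = some y)
    (hcross : ∀ (lw lw' : List V) (b q b' q' : V),
      b ∈ p₂ → q ∈ p₁ → b' ∈ p₂ → q' ∈ p₁ →
      IsWalk E lw b q → IsWalk E lw' b' q' →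
      p₂.idxOf b' < p₂.idxOf b → p₁.idxOf q' < p₁.idxOf q →
      ∃ x, x ∈ lw ∧ x ∈ lw')
    (β ε : ℝ) (hβ : 0 < β) (hε : 0 < ε) :
    ∃ (t : ℕ) (b v : Fin t → V), (t : ℝ) ≤ 1 / ε + 1 ∧
      (∀ i, b i ∈ p₂) ∧ (∀ i, v i ∈ p₁) ∧
      (∀ i j : Fin t, i < j → p₂.idxOf (b i) < p₂.idxOf (b j)) ∧
      (∀ x bf, x ∈ p₂ → IsDFirst E w x p₁ β bf →
        ∃ i : Fin t, p₂.idxOf x ≤ p₂.idxOf (b i) ∧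
          (∀ j : Fin t, p₂.idxOf x ≤ p₂.idxOf (b j) →
            p₁.idxOf (v i) ≤ p₁.idxOf (v j)) ∧
          p₁.idxOf (v i) ≤ p₁.idxOf bf ∧
          ∃ l, IsWalk E l x (v i) ∧ walkLen w l ≤ (1 + ε) * β) ∧
      (∀ x ∈ p₂, (∀ i : Fin t, p₂.idxOf (b i) < p₂.idxOf x) →
        ¬ ∃ l c, c ∈ p₁ ∧ IsWalk E l x c ∧ walkLen w l ≤ β) := by
  have hεβ : 0 < ε * β := mul_pos hε hβ
  have hβε : β ≤ (1 + ε) * β := by nlinarith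
  by_cases hH : ∃ x, x ∈ p₂ ∧ ∃ c ∈ p₁, Stmt9.Reach E w β x c
  case neg =>
    refine ⟨0, Fin.elim0, Fin.elim0, ?_, fun i => i.elim0, fun i => i.elim0,
      fun i => i.elim0, ?_, ?_⟩
    · have h1 : (0:ℝ) < 1/ε := by positivity
      push_cast
      linarith
    · intro x bf hx hdf
      exact absurd ⟨x, hx, bf, hdf.1, hdf.2.1⟩ hH
    · rintro x hx - ⟨l, c, hc, hwk, hlen⟩
      exact hH ⟨x, hx, c, hc, l, hwk, hlen⟩
  case pos =>
  obtain ⟨x₀, hx₀, c₀, hc₀, hr₀⟩ := hH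
  set n := p₂.length with hn'
  have hn : 0 < n := List.length_pos_iff.2 (List.ne_nil_of_mem hx₀)
  set X : ℕ → V := Stmt9.XX p₂ x₀ with hX
  set vfn : V → V := Stmt9.vf E w p₁ β x₀ with hvfn
  set BS : ℕ → ℕ := fun s => Stmt9.Bx E w p₂ β ε x₀ (vfn (X s)) with hBS
  set g : ℕ → Option ℕ := Stmt9.gg E w p₂ p₁ β ε x₀ with hg
  have hXg : ∀ j (hj : j < n), X j = p₂[j]'hj := fun j hj => Stmt9.XX_eq p₂ x₀ hj
  have hXmem : ∀ j, j < n → X j ∈ p₂ := fun j hj => Stmt9.XX_mem p₂ x₀ hj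
  have hidx2 : ∀ j (hj : j < n), p₂.idxOf (X j) = j := by
    intro j hj
    rw [hXg j hj]
    exact List.Nodup.idxOf_getElem hp₂nd j hj
  have hgetidx : ∀ x, x ∈ p₂ → X (p₂.idxOf x) = x := by
    intro x hx
    rw [hXg _ (List.idxOf_lt_length_iff.2 hx)]
    exact List.getElem_idxOf _
  have hidxlt : ∀ x, x ∈ p₂ → p₂.idxOf x < n := fun x hx => List.idxOf_lt_length_iff.2 hx
  have hreachmono : ∀ (γ : ℝ) (i j : ℕ) (c : V), i ≤ j → j < n →
      Stmt9.Reach E w γ (X j) c → Stmt9.Reach E w γ (X i) c := by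
    intro γ i j c hij hj h
    rw [hXg j hj] at h
    have := Stmt9.reach_idx_mono E w hw hp₂ch hp₂len hij hj h
    rwa [← hXg i (lt_of_le_of_lt hij hj)] at this
  have hRPmono : ∀ i j : ℕ, i ≤ j → j < n →
      Stmt9.RP E w p₁ β (X j) → Stmt9.RP E w p₁ β (X i) := by
    rintro i j hij hj ⟨c, hc, hr⟩
    exact ⟨c, hc, hreachmono β i j c hij hj hr⟩
  have hidx1eq : ∀ a b : V, a ∈ p₁ → b ∈ p₁ → p₁.idxOf a = p₁.idxOf b → a = b := by
    intro a b ha hb h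
    have h1 : p₁[p₁.idxOf a]'(List.idxOf_lt_length_iff.2 ha) = a := List.getElem_idxOf _
    have h2 : p₁[p₁.idxOf b]'(List.idxOf_lt_length_iff.2 hb) = b := List.getElem_idxOf _
    rw [← h1, ← h2]
    congr 1
  -- basic facts about the recursion
  have hr0' : Stmt9.RP E w p₁ β (X 0) := by
    refine ⟨c₀, hc₀, hreachmono β 0 (p₂.idxOf x₀) c₀ (Nat.zero_le _) (hidxlt _ hx₀) ?_⟩
    rwa [hgetidx x₀ hx₀]
  have hg0 : g 0 = some 0 := by
    rw [hg, Stmt9.gg, if_pos ⟨hn, hr0'⟩]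
  have hgeq1 : ∀ i s s', g i = some s → g (i+1) = some s' →
      s' = BS s + 1 ∧ BS s + 1 < n ∧ Stmt9.RP E w p₁ β (X (BS s + 1)) := by
    intro i s s' hs hs'
    rw [hg] at hs hs'
    rw [Stmt9.gg, hs] at hs'
    simp only [Option.bind_some] at hs'
    split at hs'
    case isTrue h => exact ⟨(Option.some.inj hs').symm, h⟩
    case isFalse h => cases hs'
  have hgeq0 : ∀ i s, g i = some s → g (i+1) = none →
      ¬ (BS s + 1 < n ∧ Stmt9.RP E w p₁ β (X (BS s + 1))) := by
    intro i s hs hs'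
    rw [hg] at hs hs'
    rw [Stmt9.gg, hs] at hs'
    simp only [Option.bind_some] at hs'
    split at hs'
    case isTrue h => cases hs'
    case isFalse h => exact h
  have hFSself : ∀ s, s < n → Stmt9.RP E w p₁ β (X s) →
      s ∈ Stmt9.FS E w p₂ β ε x₀ (vfn (X s)) := by
    intro s hsn hrp
    rw [Stmt9.FS_mem]
    exact ⟨hsn, Stmt9.reach_budget E w hβε (Stmt9.vf_spec E w p₁ β x₀ hrp).2.1⟩
  have hFSne : ∀ s, s < n → Stmt9.RP E w p₁ β (X s) →
      (Stmt9.FS E w p₂ β ε x₀ (vfn (X s))).Nonempty :=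
    fun s hsn hrp => ⟨s, hFSself s hsn hrp⟩
  have hinv : ∀ i s, g i = some s → s < n ∧ Stmt9.RP E w p₁ β (X s) := by
    intro i
    induction i with
    | zero =>
      intro s hs
      rw [hg0] at hs
      obtain rfl := (Option.some.inj hs).symm
      exact ⟨hn, hr0'⟩
    | succ i ih =>
      intro s hs
      cases hgi : g i with
      | none =>
        rw [hg] at hs hgi
        rw [Stmt9.gg, hgi] at hs
        simp at hs
      | some s0 =>
        obtain ⟨he, hlt, hrp⟩ := hgeq1 i s0 s hgi hs
        rw [he]
        exact ⟨hlt, hrp⟩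
  have hsB : ∀ s, s < n → Stmt9.RP E w p₁ β (X s) → s ≤ BS s := by
    intro s hsn hrp
    exact Stmt9.Bx_le E w p₂ β ε x₀ (hFSne s hsn hrp) (hFSself s hsn hrp)
  have hgrow : ∀ i s, g i = some s → i ≤ s := by
    intro i
    induction i with
    | zero => intro s _; exact Nat.zero_le _
    | succ i ih =>
      intro s hs
      cases hgi : g i with
      | none =>
        rw [hg] at hs hgi
        rw [Stmt9.gg, hgi] at hs
        simp at hs
      | some s0 =>
        obtain ⟨he, hlt, hrp⟩ := hgeq1 i s0 s hgi hs
        have h1 := ih s0 hgi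
        have h2 := hsB s0 (hinv i s0 hgi).1 (hinv i s0 hgi).2
        omega
  have hgnone : g n = none := by
    cases hgn : g n with
    | none => rfl
    | some s =>
      have h1 := hgrow n s hgn
      have h2 := (hinv n s hgn).1
      omega
  have hex : ∃ m, g m = none := ⟨n, hgnone⟩
  set t := Nat.find hex with ht
  have hgt : g t = none := Nat.find_spec hex
  have hsome : ∀ i, i < t → ∃ s, g i = some s := by
    intro i hi
    have := Nat.find_min hex hi
    cases hgi : g i with
    | none => exact absurd hgi this
    | some s => exact ⟨s, rfl⟩
  have ht0 : 0 < t := by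
    rcases Nat.eq_zero_or_pos t with h | h
    · rw [h] at hgt
      rw [hg0] at hgt
      cases hgt
    · exact h
  set sfun : ℕ → ℕ := fun i => (g i).getD 0 with hsfun'
  have hsfun : ∀ i, i < t → g i = some (sfun i) := by
    intro i hi
    obtain ⟨s, hs⟩ := hsome i hi
    rw [hs]
    simp [hsfun', hs]
  have hsfun0 : sfun 0 = 0 := by
    have := hsfun 0 ht0
    rw [hg0] at this
    exact (Option.some.inj this).symm
  set vv : ℕ → V := fun i => vfn (X (sfun i)) with hvv
  set Bf : ℕ → ℕ := fun i => BS (sfun i) with hBf'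
  have hPs : ∀ i, i < t → sfun i < n ∧ Stmt9.RP E w p₁ β (X (sfun i)) :=
    fun i hi => hinv i (sfun i) (hsfun i hi)
  have hvf : ∀ i, i < t → vv i ∈ p₁ ∧ Stmt9.Reach E w β (X (sfun i)) (vv i) ∧
      ∀ c ∈ p₁, Stmt9.Reach E w β (X (sfun i)) c → p₁.idxOf (vv i) ≤ p₁.idxOf c :=
    fun i hi => Stmt9.vf_spec E w p₁ β x₀ (hPs i hi).2
  have hFSneI : ∀ i, i < t → (Stmt9.FS E w p₂ β ε x₀ (vv i)).Nonempty :=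
    fun i hi => hFSne (sfun i) (hPs i hi).1 (hPs i hi).2
  have hBfmem : ∀ i, i < t → Bf i < n ∧ Stmt9.Reach E w ((1+ε)*β) (X (Bf i)) (vv i) := by
    intro i hi
    have := Stmt9.Bx_mem E w p₂ β ε x₀ (hFSneI i hi)
    rw [Stmt9.FS_mem] at this
    exact this
  have hBfmax : ∀ i, i < t → ∀ j, j < n → Stmt9.Reach E w ((1+ε)*β) (X j) (vv i) →
      j ≤ Bf i := by
    intro i hi j hj hr
    exact Stmt9.Bx_le E w p₂ β ε x₀ (hFSneI i hi) ((Stmt9.FS_mem E w p₂ β ε x₀).2 ⟨hj, hr⟩)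
  have hsBf : ∀ i, i < t → sfun i ≤ Bf i := fun i hi => hsB (sfun i) (hPs i hi).1 (hPs i hi).2
  have hstep2 : ∀ i, i + 1 < t → sfun (i+1) = Bf i + 1 := by
    intro i hi
    exact (hgeq1 i (sfun i) (sfun (i+1)) (hsfun i (by omega)) (hsfun (i+1) hi)).1
  have hnotreach : ∀ i, i + 1 < t → ¬ Stmt9.Reach E w ((1+ε)*β) (X (sfun (i+1))) (vv i) := by
    intro i hi hr
    have h1 := hBfmax i (by omega) (sfun (i+1)) (hPs (i+1) hi).1 hr
    rw [hstep2 i hi] at h1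
    omega
  have hvmono1 : ∀ i, i + 1 < t → p₁.idxOf (vv i) < p₁.idxOf (vv (i+1)) := by
    intro i hi
    have hii : i < t := by omega
    have hs1 : sfun i ≤ sfun (i+1) := by
      rw [hstep2 i hi]
      have := hsBf i hii
      omega
    have hle : p₁.idxOf (vv i) ≤ p₁.idxOf (vv (i+1)) :=
      (hvf i hii).2.2 (vv (i+1)) (hvf (i+1) hi).1
        (hreachmono β (sfun i) (sfun (i+1)) (vv (i+1)) hs1 (hPs (i+1) hi).1 (hvf (i+1) hi).2.1)
    rcases lt_or_eq_of_le hle with h | h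
    · exact h
    · exfalso
      have heq : vv i = vv (i+1) := hidx1eq _ _ (hvf i hii).1 (hvf (i+1) hi).1 h
      apply hnotreach i hi
      rw [heq]
      exact Stmt9.reach_budget E w hβε (hvf (i+1) hi).2.1
  have hvmonos : ∀ j, j < t → ∀ i, i < j → p₁.idxOf (vv i) < p₁.idxOf (vv j) := by
    intro j
    induction j with
    | zero => intro _ i hi; omega
    | succ m ih =>
      intro hj i hi
      rcases Nat.lt_or_ge i m with h | h
      · exact lt_trans (ih (by omega) i h) (hvmono1 m hj)
      · obtain rfl : i = m := by omega
        exact hvmono1 i hj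
  have hvmonole : ∀ i j, i ≤ j → j < t → p₁.idxOf (vv i) ≤ p₁.idxOf (vv j) := by
    intro i j hij hj
    rcases lt_or_eq_of_le hij with h | h
    · exact le_of_lt (hvmonos j hj i h)
    · rw [h]
  have hBmono1 : ∀ i, i + 1 < t → Bf i < Bf (i+1) := by
    intro i hi
    have h1 := hsBf (i+1) hi
    rw [hstep2 i hi] at h1
    omega
  have hBmonos : ∀ j, j < t → ∀ i, i < j → Bf i < Bf j := by
    intro j
    induction j with
    | zero => intro _ i hi; omega
    | succ m ih =>
      intro hj i hi
      rcases Nat.lt_or_ge i m with h | h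
      · exact lt_trans (ih (by omega) i h) (hBmono1 m hj)
      · obtain rfl : i = m := by omega
        exact hBmono1 i hj
  -- the key length lower bound
  have hcore : ∀ i, i < t → ∀ (bb qq : V) (C : List V), bb ∈ p₂ → qq ∈ p₁ →
      Bf i < p₂.idxOf bb → p₁.idxOf (vv i) < p₁.idxOf qq → IsWalk E C bb qq →
      ∀ A : ℝ, (∀ C' : List V, IsWalk E C' (X (sfun i)) qq → A ≤ walkLen w C') →
      (1+ε)*β - β + A ≤ walkLen w C := by
    intro i hi bb qq C hbb hqq hBlt hvlt hC A hA
    obtain ⟨L, hL, hLlen⟩ := (hvf i hi).2.1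
    obtain ⟨z, hzC, hzL⟩ := hcross C L bb qq (X (sfun i)) (vv i) hbb hqq
      (hXmem (sfun i) (hPs i hi).1) (hvf i hi).1 hC hL
      (by rw [hidx2 (sfun i) (hPs i hi).1]; have := hsBf i hi; omega) hvlt
    obtain ⟨C₁, C₂, hC₁, hC₂, hClen⟩ := Stmt9.walk_split w hC hzC
    obtain ⟨L₁, L₂, hL₁, hL₂, hLsplit⟩ := Stmt9.walk_split w hL hzL
    obtain ⟨M, hM, hMlen⟩ := Stmt9.walk_trans w hC₁ hL₂
    have hM1 : (1+ε)*β < walkLen w M := by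
      by_contra hle
      push_neg at hle
      have hbblt : p₂.idxOf bb < n := hidxlt bb hbb
      have h2 : p₂.idxOf bb ≤ Bf i := by
        apply hBfmax i hi _ hbblt
        rw [hgetidx bb hbb]
        exact ⟨M, hM, hle⟩
      omega
    obtain ⟨M', hM', hM'len⟩ := Stmt9.walk_trans w hL₁ hC₂
    have hM2 : A ≤ walkLen w M' := hA M' hM'
    linarith
  have hstar : ∀ i, i < t → ∀ (bb qq : V) (C : List V), bb ∈ p₂ → qq ∈ p₁ →
      Bf i < p₂.idxOf bb → p₁.idxOf (vv i) < p₁.idxOf qq → IsWalk E C bb qq →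
      ((i:ℝ)+1) * (ε*β) ≤ walkLen w C := by
    intro i
    induction i with
    | zero =>
      intro h0 bb qq C hbb hqq hB hv hC
      have h := hcore 0 h0 bb qq C hbb hqq hB hv hC 0
        (fun C' _ => Stmt9.walkLen_nonneg w hw C')
      have hr : (1+ε)*β - β + 0 = ε*β := by ring
      rw [hr] at h
      push_cast
      linarith
    | succ m ih =>
      intro hmt bb qq C hbb hqq hB hv hC
      have hmlt : m < t := by omega
      have hA : ∀ C' : List V, IsWalk E C' (X (sfun (m+1))) qq →
          ((m:ℝ)+1)*(ε*β) ≤ walkLen w C' := by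
        intro C' hC'
        apply ih hmlt (X (sfun (m+1))) qq C' (hXmem _ (hPs (m+1) hmt).1) hqq ?_ ?_ hC'
        · rw [hidx2 (sfun (m+1)) (hPs (m+1) hmt).1, hstep2 m hmt]
          omega
        · exact lt_trans (hvmono1 m hmt) hv
      have h := hcore (m+1) hmt bb qq C hbb hqq hB hv hC _ hA
      have hr : (1+ε)*β - β + ((m:ℝ)+1)*(ε*β) = ((m:ℝ)+2)*(ε*β) := by ring
      rw [hr] at h
      push_cast
      linarith
  -- the bound on t
  have htb : (t:ℝ) ≤ 1/ε + 1 := by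
    rcases Nat.lt_or_ge t 2 with h2 | h2
    · have h1 : (0:ℝ) < 1/ε := by positivity
      have : (t:ℝ) ≤ 1 := by exact_mod_cast Nat.lt_succ_iff.1 h2
      linarith
    · have het : t - 2 + 1 = t - 1 := by omega
      have ht1 : t - 1 < t := by omega
      have ht2 : t - 2 < t := by omega
      obtain ⟨L, hL, hLlen⟩ := (hvf (t-1) ht1).2.1
      have h := hstar (t-2) ht2 (X (sfun (t-1))) (vv (t-1)) L
        (hXmem _ (hPs (t-1) ht1).1) (hvf (t-1) ht1).1 ?_ ?_ hL
      · have hc : ((t-2 : ℕ):ℝ) = (t:ℝ) - 2 := by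
          push_cast [Nat.cast_sub (by omega : 2 ≤ t)]
          ring
        rw [hc] at h
        have h3 : ((t:ℝ) - 1) * ε ≤ 1 := by nlinarith
        have h4 : (t:ℝ) - 1 ≤ 1/ε := by
          rw [le_div_iff₀ hε]
          linarith
        linarith
      · rw [hidx2 (sfun (t-1)) (hPs (t-1) ht1).1]
        rw [← het, hstep2 (t-2) (by omega)]
        omega
      · rw [← het]
        exact hvmono1 (t-2) (by omega)
  -- coverage
  have hcover : ∀ x, x ∈ p₂ → Stmt9.RP E w p₁ β x → p₂.idxOf x ≤ Bf (t-1) := by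
    intro x hx hRP
    by_contra hgt'
    push_neg at hgt'
    have hxlt : p₂.idxOf x < n := hidxlt x hx
    have het : t - 1 + 1 = t := by omega
    have h2 := hgeq0 (t-1) (sfun (t-1)) (hsfun (t-1) (by omega)) (by rw [het]; exact hgt)
    have hBfd : BS (sfun (t-1)) = Bf (t-1) := rfl
    refine h2 ⟨by omega, ?_⟩
    apply hRPmono (Bf (t-1) + 1) (p₂.idxOf x) (by omega) hxlt
    rwa [hgetidx x hx]
  -- conclusion
  refine ⟨t, fun i => X (Bf i.val), fun i => vv i.val, htb, ?_, ?_, ?_, ?_, ?_⟩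
  · intro i
    exact hXmem _ (hBfmem i.val i.isLt).1
  · intro i
    exact (hvf i.val i.isLt).1
  · intro i j hij
    rw [hidx2 _ (hBfmem i.val i.isLt).1, hidx2 _ (hBfmem j.val j.isLt).1]
    exact hBmonos j.val j.isLt i.val hij
  · intro x bf hx hdf
    have hRPx : Stmt9.RP E w p₁ β x := ⟨bf, hdf.1, hdf.2.1⟩
    have hk : p₂.idxOf x ≤ Bf (t-1) := hcover x hx hRPx
    have hex2 : ∃ i, i < t ∧ p₂.idxOf x ≤ Bf i := ⟨t-1, by omega, hk⟩
    set i0 := Nat.find hex2 with hi0'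
    obtain ⟨hi0t, hi0B⟩ := Nat.find_spec hex2
    have hs0 : sfun i0 ≤ p₂.idxOf x := by
      rcases Nat.eq_zero_or_pos i0 with h | h
      · rw [h, hsfun0]
        exact Nat.zero_le _
      · have hm1 : i0 - 1 + 1 = i0 := by omega
        have hmin := Nat.find_min hex2 (show i0 - 1 < i0 by omega)
        push_neg at hmin
        have hBm : Bf (i0 - 1) < p₂.idxOf x := hmin (by omega)
        have hsf : sfun i0 = Bf (i0 - 1) + 1 := by
          rw [← hm1]
          exact hstep2 (i0 - 1) (by rw [hm1]; exact hi0t)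
        omega
    refine ⟨⟨i0, hi0t⟩, ?_, ?_, ?_, ?_⟩
    · rw [hidx2 _ (hBfmem i0 hi0t).1]
      exact hi0B
    · intro j hj
      rw [hidx2 _ (hBfmem j.val j.isLt).1] at hj
      have hij : i0 ≤ j.val := Nat.find_min' hex2 ⟨j.isLt, hj⟩
      exact hvmonole i0 j.val hij j.isLt
    · apply (hvf i0 hi0t).2.2 bf hdf.1
      apply hreachmono β (sfun i0) (p₂.idxOf x) bf hs0 (hidxlt x hx)
      rw [hgetidx x hx]
      exact hdf.2.1
    · obtain ⟨F, hF, hF0⟩ := Stmt9.free_walk E w hw hp₂ch hp₂len (Bf i0) (p₂.idxOf x)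
        hi0B (hBfmem i0 hi0t).1
      obtain ⟨W, hW, hWlen⟩ := (hBfmem i0 hi0t).2
      rw [← hXg _ (hBfmem i0 hi0t).1] at hF
      have hFx : IsWalk E F x (X (Bf i0)) := by
        have := hgetidx x hx
        rw [hXg _ (hidxlt x hx)] at this
        rwa [this] at hF
      obtain ⟨l, hl, hlen⟩ := Stmt9.walk_trans w hFx hW
      exact ⟨l, hl, by rw [hlen, hF0]; linarith⟩
  · rintro x hx hall ⟨l, c, hc, hwk, hlen⟩
    have hRPx : Stmt9.RP E w p₁ β x := ⟨c, hc, l, hwk, hlen⟩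
    have hk := hcover x hx hRPx
    have h1 := hall ⟨t-1, by omega⟩
    rw [hidx2 _ (hBfmem (t-1) (by omega)).1] at h1
    omega
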